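/- For k ∈ (0,1), the 2K-periodic problem L₊v = 0, where L₊ = −d²/dz² − 6dn²(z|k) − k² + 2, has a one-dimensional solution space on H²_per[0,2K): every 2K-periodic solution is a constant multiple of w(z) = sn(z|k)cn(z|k). -/

import Mathlib

set_option maxHeartbeats 1000000

open MeasureTheory

/-- Complete elliptic integral of the first kind. -/
noncomputable def ellipticK (k : ℝ) : ℝ :=
  ∫ θ in (0:ℝ)..(Real.pi / 2), 1 / Real.sqrt (1 - k ^ 2 * Real.sin θ ^ 2)

/-- Complete elliptic integral of the second kind. -/
noncomputable def ellipticE (k : ℝ) : ℝ :=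
  ∫ θ in (0:ℝ)..(Real.pi / 2), Real.sqrt (1 - k ^ 2 * Real.sin θ ^ 2)

/-- The operator L₋f = −f'' − (2 dn²z + k² − 2)f. -/
noncomputable def Lm (k : ℝ) (dn : ℝ → ℝ) (f : ℝ → ℝ) : ℝ → ℝ :=
  fun z => -(deriv (deriv f) z) - (2 * dn z ^ 2 + k ^ 2 - 2) * f z

/-- The operator L₊f = −f'' − (6 dn²z + k² − 2)f. -/
noncomputable def Lp (k : ℝ) (dn : ℝ → ℝ) (f : ℝ → ℝ) : ℝ → ℝ :=
  fun z => -(deriv (deriv f) z) - (6 * dn z ^ 2 + k ^ 2 - 2) * f z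

noncomputable def Dl (k : ℝ) : ℝ → ℝ := fun θ => Real.sqrt (1 - k ^ 2 * Real.sin θ ^ 2)
noncomputable def Fl (k : ℝ) : ℝ → ℝ := fun x => ∫ θ in (0:ℝ)..x, 1 / Dl k θ

section
variable {k : ℝ} {sn cn dn : ℝ → ℝ}

theorem my_pyth (hsn0 : sn 0 = 0) (hcn0 : cn 0 = 1)
    (hsn' : ∀ z, HasDerivAt sn (cn z * dn z) z)
    (hcn' : ∀ z, HasDerivAt cn (-(sn z * dn z)) z) :
    ∀ z, sn z ^ 2 + cn z ^ 2 = 1 := by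
  intro z
  have h : ∀ x, HasDerivAt (fun z => sn z ^ 2 + cn z ^ 2) 0 x := by
    intro x
    have h2 := ((hsn' x).pow 2).add ((hcn' x).pow 2)
    refine h2.congr_deriv ?_
    ring
  have hc := is_const_of_deriv_eq_zero (𝕜 := ℝ)
    (fun x => (h x).differentiableAt) (fun x => (h x).deriv) z 0
  simp only [hsn0, hcn0] at hc
  norm_num at hc
  exact hc

theorem my_dnsq (k : ℝ) (hsn0 : sn 0 = 0) (hdn0 : dn 0 = 1)
    (hsn' : ∀ z, HasDerivAt sn (cn z * dn z) z)
    (hdn' : ∀ z, HasDerivAt dn (-(k ^ 2 * sn z * cn z)) z) :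
    ∀ z, dn z ^ 2 = 1 - k ^ 2 * sn z ^ 2 := by
  intro z
  have h : ∀ x, HasDerivAt (fun z => dn z ^ 2 + k ^ 2 * sn z ^ 2) 0 x := by
    intro x
    have h2 := ((hdn' x).pow 2).add (((hsn' x).pow 2).const_mul (k ^ 2))
    refine h2.congr_deriv ?_
    ring
  have hc := is_const_of_deriv_eq_zero (𝕜 := ℝ)
    (fun x => (h x).differentiableAt) (fun x => (h x).deriv) z 0
  simp only [hsn0, hdn0] at hc
  norm_num at hc
  linarith

theorem my_dn_pos (hk1 : k < 1) (hk0 : 0 < k) (hdn0 : dn 0 = 1)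
    (hdn' : ∀ z, HasDerivAt dn (-(k ^ 2 * sn z * cn z)) z)
    (hdnsq : ∀ z, dn z ^ 2 = 1 - k ^ 2 * sn z ^ 2)
    (hsnb : ∀ z, sn z ^ 2 ≤ 1) :
    ∀ z, 0 < dn z := by
  intro z
  by_contra hle
  push_neg at hle
  have hcont : ContinuousOn dn (Set.uIcc 0 z) :=
    fun x _ => ((hdn' x).differentiableAt.continuousAt).continuousWithinAt
  have h0 : (0:ℝ) ∈ Set.uIcc (dn 0) (dn z) := by
    rw [Set.mem_uIcc]; rw [hdn0]; right; constructor <;> linarith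
  obtain ⟨c, _, hc⟩ := intermediate_value_uIcc hcont h0
  have h1 : dn c ^ 2 = 1 - k ^ 2 * sn c ^ 2 := hdnsq c
  have h2 : sn c ^ 2 ≤ 1 := hsnb c
  rw [hc] at h1
  nlinarith

end

section
variable {k : ℝ} {sn cn dn : ℝ → ℝ}

theorem Dl_inner_pos (hk0 : 0 < k) (hk1 : k < 1) (θ : ℝ) :
    1 - k ^ 2 ≤ 1 - k ^ 2 * Real.sin θ ^ 2 := by
  nlinarith [Real.sin_sq_le_one θ, sq_nonneg k]

theorem Dl_pos (hk0 : 0 < k) (hk1 : k < 1) (θ : ℝ) : 0 < Dl k θ := by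
  have h := Dl_inner_pos hk0 hk1 θ
  have : (0:ℝ) < 1 - k ^ 2 := by nlinarith
  exact Real.sqrt_pos.mpr (by linarith)

theorem Dl_ge (hk0 : 0 < k) (hk1 : k < 1) (θ : ℝ) : Real.sqrt (1 - k ^ 2) ≤ Dl k θ :=
  Real.sqrt_le_sqrt (Dl_inner_pos hk0 hk1 θ)

theorem Dl_le_one (hk0 : 0 < k) (hk1 : k < 1) (θ : ℝ) : Dl k θ ≤ 1 := by
  rw [show (1:ℝ) = Real.sqrt 1 by simp]
  exact Real.sqrt_le_sqrt (by nlinarith [sq_nonneg (Real.sin θ), sq_nonneg (k * Real.sin θ)])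

theorem Dl_sq (hk0 : 0 < k) (hk1 : k < 1) (θ : ℝ) : Dl k θ ^ 2 = 1 - k ^ 2 * Real.sin θ ^ 2 := by
  have h := Dl_inner_pos hk0 hk1 θ
  have h2 : (0:ℝ) < 1 - k ^ 2 := by nlinarith
  exact Real.sq_sqrt (by linarith)

theorem Dl_hasDerivAt (hk0 : 0 < k) (hk1 : k < 1) (θ : ℝ) :
    HasDerivAt (Dl k) (-(k ^ 2 * Real.sin θ * Real.cos θ) / Dl k θ) θ := by
  have hin : HasDerivAt (fun θ => 1 - k ^ 2 * Real.sin θ ^ 2)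
      (-(k ^ 2 * (2 * Real.sin θ ^ 1 * Real.cos θ))) θ := by
    simpa using (((Real.hasDerivAt_sin θ).pow 2).const_mul (k ^ 2)).const_sub 1
  have h := hin.sqrt (by
    have := Dl_inner_pos hk0 hk1 θ; nlinarith)
  refine h.congr_deriv ?_
  rw [show Real.sqrt (1 - k ^ 2 * Real.sin θ ^ 2) = Dl k θ from rfl]
  field_simp

theorem Dl_continuous (hk0 : 0 < k) (hk1 : k < 1) : Continuous fun θ => 1 / Dl k θ := by
  apply Continuous.div continuous_const
  · exact (continuous_const.sub (continuous_const.mul ((Real.continuous_sin).pow 2))).sqrt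
  · exact fun θ => (Dl_pos hk0 hk1 θ).ne'

theorem Fl_hasDerivAt (hk0 : 0 < k) (hk1 : k < 1) (x : ℝ) :
    HasDerivAt (Fl k) (1 / Dl k x) x :=
  ((Dl_continuous hk0 hk1).integral_hasStrictDerivAt 0 x).hasDerivAt

theorem inversion (hk0 : 0 < k) (hk1 : k < 1)
    (hsn0 : sn 0 = 0) (hcn0 : cn 0 = 1) (hdn0 : dn 0 = 1)
    (hsn' : ∀ z, HasDerivAt sn (cn z * dn z) z)
    (hcn' : ∀ z, HasDerivAt cn (-(sn z * dn z)) z)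
    (hdn' : ∀ z, HasDerivAt dn (-(k ^ 2 * sn z * cn z)) z)
    (hcnb : ∀ z, |cn z| ≤ 1) (hdnb : ∀ z, |dn z| ≤ 1) :
    ∀ b, 0 ≤ b →
      sn (Fl k b) = Real.sin b ∧ cn (Fl k b) = Real.cos b ∧ dn (Fl k b) = Dl k b := by
  intro b hb
  set δ : ℝ := Real.sqrt (1 - k ^ 2) with hδdef
  have hδpos : 0 < δ := Real.sqrt_pos.mpr (by nlinarith)
  set e : ℝ → ℝ := fun θ => (sn (Fl k θ) - Real.sin θ) ^ 2 + (cn (Fl k θ) - Real.cos θ) ^ 2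
      + (dn (Fl k θ) - Dl k θ) ^ 2 with hedef
  set ed : ℝ → ℝ := fun θ =>
      2 * (sn (Fl k θ) - Real.sin θ) * (cn (Fl k θ) * dn (Fl k θ) * (1 / Dl k θ) - Real.cos θ)
    + 2 * (cn (Fl k θ) - Real.cos θ) * (-(sn (Fl k θ) * dn (Fl k θ)) * (1 / Dl k θ) - (-Real.sin θ))
    + 2 * (dn (Fl k θ) - Dl k θ) * (-(k ^ 2 * sn (Fl k θ) * cn (Fl k θ)) * (1 / Dl k θ)
        - -(k ^ 2 * Real.sin θ * Real.cos θ) / Dl k θ) with heddef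
  have hx : ∀ θ, HasDerivAt (fun θ => sn (Fl k θ) - Real.sin θ)
      (cn (Fl k θ) * dn (Fl k θ) * (1 / Dl k θ) - Real.cos θ) θ := fun θ =>
    ((hsn' (Fl k θ)).comp θ (Fl_hasDerivAt hk0 hk1 θ)).sub (Real.hasDerivAt_sin θ)
  have hy : ∀ θ, HasDerivAt (fun θ => cn (Fl k θ) - Real.cos θ)
      (-(sn (Fl k θ) * dn (Fl k θ)) * (1 / Dl k θ) - (-Real.sin θ)) θ := fun θ =>
    ((hcn' (Fl k θ)).comp θ (Fl_hasDerivAt hk0 hk1 θ)).sub (Real.hasDerivAt_cos θ)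
  have hz : ∀ θ, HasDerivAt (fun θ => dn (Fl k θ) - Dl k θ)
      (-(k ^ 2 * sn (Fl k θ) * cn (Fl k θ)) * (1 / Dl k θ)
        - -(k ^ 2 * Real.sin θ * Real.cos θ) / Dl k θ) θ := fun θ =>
    ((hdn' (Fl k θ)).comp θ (Fl_hasDerivAt hk0 hk1 θ)).sub (Dl_hasDerivAt hk0 hk1 θ)
  have he : ∀ θ, HasDerivAt e (ed θ) θ := by
    intro θ
    have h := (((hx θ).pow 2).add ((hy θ).pow 2)).add ((hz θ).pow 2)
    refine h.congr_deriv ?_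
    simp only [heddef]
    push_cast
    ring
  have hbound : ∀ θ, |ed θ| ≤ 6 / δ * |e θ| := by
    intro θ
    have hDpos := Dl_pos hk0 hk1 θ
    have hDge := Dl_ge hk0 hk1 θ
    set X := sn (Fl k θ) - Real.sin θ
    set Y := cn (Fl k θ) - Real.cos θ
    set Z := dn (Fl k θ) - Dl k θ
    have hb1 : |cn (Fl k θ) * dn (Fl k θ) * (1 / Dl k θ) - Real.cos θ| ≤ (|Y| + |Z|) / δ := by
      have heq : cn (Fl k θ) * dn (Fl k θ) * (1 / Dl k θ) - Real.cos θ
          = (Y * dn (Fl k θ) + Real.cos θ * Z) / Dl k θ := by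
        field_simp [X, Y, Z]; ring
      rw [heq, abs_div, abs_of_pos hDpos]
      apply div_le_div₀ (by positivity) ?_ hδpos hDge
      calc |Y * dn (Fl k θ) + Real.cos θ * Z| ≤ |Y * dn (Fl k θ)| + |Real.cos θ * Z| :=
            abs_add_le _ _
        _ ≤ |Y| + |Z| := by
            rw [abs_mul, abs_mul]
            nlinarith [hdnb (Fl k θ), Real.abs_cos_le_one θ, abs_nonneg Y, abs_nonneg Z,
              abs_nonneg (dn (Fl k θ)), abs_nonneg (Real.cos θ)]
    have hb2 : |-(sn (Fl k θ) * dn (Fl k θ)) * (1 / Dl k θ) - (-Real.sin θ)| ≤ (|X| + |Z|) / δ := by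
      have heq : -(sn (Fl k θ) * dn (Fl k θ)) * (1 / Dl k θ) - (-Real.sin θ)
          = -(X * dn (Fl k θ) + Real.sin θ * Z) / Dl k θ := by
        field_simp [X, Y, Z]; ring
      rw [heq, abs_div, abs_of_pos hDpos, abs_neg]
      apply div_le_div₀ (by positivity) ?_ hδpos hDge
      calc |X * dn (Fl k θ) + Real.sin θ * Z| ≤ |X * dn (Fl k θ)| + |Real.sin θ * Z| :=
            abs_add_le _ _
        _ ≤ |X| + |Z| := by
            rw [abs_mul, abs_mul]
            nlinarith [hdnb (Fl k θ), Real.abs_sin_le_one θ, abs_nonneg X, abs_nonneg Z,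
              abs_nonneg (dn (Fl k θ)), abs_nonneg (Real.sin θ)]
    have hb3 : |-(k ^ 2 * sn (Fl k θ) * cn (Fl k θ)) * (1 / Dl k θ)
        - -(k ^ 2 * Real.sin θ * Real.cos θ) / Dl k θ| ≤ (|X| + |Y|) / δ := by
      have heq : -(k ^ 2 * sn (Fl k θ) * cn (Fl k θ)) * (1 / Dl k θ)
          - -(k ^ 2 * Real.sin θ * Real.cos θ) / Dl k θ
          = -(k ^ 2 * (X * cn (Fl k θ) + Real.sin θ * Y)) / Dl k θ := by
        field_simp [X, Y, Z]; ring
      rw [heq, abs_div, abs_of_pos hDpos, abs_neg]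
      apply div_le_div₀ (by positivity) ?_ hδpos hDge
      have hk2 : k ^ 2 ≤ 1 := by nlinarith
      calc |k ^ 2 * (X * cn (Fl k θ) + Real.sin θ * Y)|
          = k ^ 2 * |X * cn (Fl k θ) + Real.sin θ * Y| := by
            rw [abs_mul, abs_of_nonneg (sq_nonneg k)]
        _ ≤ 1 * (|X * cn (Fl k θ)| + |Real.sin θ * Y|) := by
            have := abs_add_le (X * cn (Fl k θ)) (Real.sin θ * Y)
            nlinarith [abs_nonneg (X * cn (Fl k θ) + Real.sin θ * Y)]
        _ ≤ |X| + |Y| := by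
            rw [one_mul, abs_mul, abs_mul]
            nlinarith [hcnb (Fl k θ), Real.abs_sin_le_one θ, abs_nonneg X, abs_nonneg Y,
              abs_nonneg (cn (Fl k θ)), abs_nonneg (Real.sin θ)]
    have hepos : 0 ≤ e θ := by positivity
    set P1 := cn (Fl k θ) * dn (Fl k θ) * (1 / Dl k θ) - Real.cos θ with hP1
    set P2 := -(sn (Fl k θ) * dn (Fl k θ)) * (1 / Dl k θ) - (-Real.sin θ) with hP2
    set P3 := -(k ^ 2 * sn (Fl k θ) * cn (Fl k θ)) * (1 / Dl k θ)
        - -(k ^ 2 * Real.sin θ * Real.cos θ) / Dl k θ with hP3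
    rw [abs_of_nonneg hepos]
    have hedform : ed θ = 2 * X * P1 + 2 * Y * P2 + 2 * Z * P3 := rfl
    have habs : |ed θ| ≤ 2 * |X| * |P1| + 2 * |Y| * |P2| + 2 * |Z| * |P3| := by
      rw [hedform]
      calc |2 * X * P1 + 2 * Y * P2 + 2 * Z * P3|
          ≤ |2 * X * P1 + 2 * Y * P2| + |2 * Z * P3| := abs_add_le _ _
        _ ≤ |2 * X * P1| + |2 * Y * P2| + |2 * Z * P3| := by
            have := abs_add_le (2 * X * P1) (2 * Y * P2); linarith
        _ = 2 * |X| * |P1| + 2 * |Y| * |P2| + 2 * |Z| * |P3| := by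
            rw [abs_mul, abs_mul, abs_mul, abs_mul, abs_mul, abs_mul, abs_two]
    have h1 : 2 * |X| * |P1| + 2 * |Y| * |P2| + 2 * |Z| * |P3|
        ≤ 2 * |X| * ((|Y| + |Z|) / δ) + 2 * |Y| * ((|X| + |Z|) / δ)
          + 2 * |Z| * ((|X| + |Y|) / δ) := by
      have := abs_nonneg X; have := abs_nonneg Y; have := abs_nonneg Z
      gcongr <;> assumption
    have h2 : 2 * |X| * ((|Y| + |Z|) / δ) + 2 * |Y| * ((|X| + |Z|) / δ)
        + 2 * |Z| * ((|X| + |Y|) / δ) ≤ 6 / δ * e θ := by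
      have heθ : e θ = X ^ 2 + Y ^ 2 + Z ^ 2 := rfl
      have hlhs : 2 * |X| * ((|Y| + |Z|) / δ) + 2 * |Y| * ((|X| + |Z|) / δ)
          + 2 * |Z| * ((|X| + |Y|) / δ)
          = (2 * |X| * (|Y| + |Z|) + 2 * |Y| * (|X| + |Z|) + 2 * |Z| * (|X| + |Y|)) / δ := by
        ring
      have hrhs : 6 / δ * (X ^ 2 + Y ^ 2 + Z ^ 2) = 6 * (X ^ 2 + Y ^ 2 + Z ^ 2) / δ := by ring
      rw [heθ, hlhs, hrhs, div_le_div_iff₀ hδpos hδpos]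
      nlinarith [sq_nonneg (|X| - |Y|), sq_nonneg (|X| - |Z|), sq_nonneg (|Y| - |Z|),
        abs_nonneg X, abs_nonneg Y, abs_nonneg Z, hδpos.le, sq_abs X, sq_abs Y, sq_abs Z]
    linarith
  -- Gronwall
  have hcont : ContinuousOn e (Set.Icc 0 b) :=
    fun θ _ => ((he θ).differentiableAt.continuousAt).continuousWithinAt
  have he0 : e 0 = 0 := by
    simp only [hedef, Fl]
    rw [intervalIntegral.integral_same]
    simp [hsn0, hcn0, hdn0, Dl]
  have hgr := norm_le_gronwallBound_of_norm_deriv_right_le (f := e) (f' := ed)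
    (δ := 0) (K := 6 / δ) (ε := 0) hcont
    (fun x _ => (he x).hasDerivWithinAt)
    (by rw [Real.norm_eq_abs, he0, abs_zero])
    (fun x _ => by
      rw [Real.norm_eq_abs, Real.norm_eq_abs]
      have := hbound x
      linarith)
  have heb : e b = 0 := by
    have h := hgr b (Set.mem_Icc.mpr ⟨hb, le_refl b⟩)
    rw [gronwallBound_ε0_δ0, Real.norm_eq_abs] at h
    have : 0 ≤ e b := by positivity
    have := abs_nonneg (e b)
    rw [abs_of_nonneg ‹0 ≤ e b›] at h
    linarith
  have hX : sn (Fl k b) - Real.sin b = 0 := by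
    have h1 : (sn (Fl k b) - Real.sin b) ^ 2 = 0 := by
      have h2 : 0 ≤ (cn (Fl k b) - Real.cos b) ^ 2 := sq_nonneg _
      have h3 : 0 ≤ (dn (Fl k b) - Dl k b) ^ 2 := sq_nonneg _
      have h4 : 0 ≤ (sn (Fl k b) - Real.sin b) ^ 2 := sq_nonneg _
      have := heb
      simp only [hedef] at this
      linarith
    exact pow_eq_zero_iff (by norm_num) |>.mp h1
  have hY : cn (Fl k b) - Real.cos b = 0 := by
    have h1 : (cn (Fl k b) - Real.cos b) ^ 2 = 0 := by
      have h2 : 0 ≤ (sn (Fl k b) - Real.sin b) ^ 2 := sq_nonneg _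
      have h3 : 0 ≤ (dn (Fl k b) - Dl k b) ^ 2 := sq_nonneg _
      have := heb
      simp only [hedef] at this
      nlinarith [sq_nonneg (cn (Fl k b) - Real.cos b)]
    exact pow_eq_zero_iff (by norm_num) |>.mp h1
  have hZ : dn (Fl k b) - Dl k b = 0 := by
    have h1 : (dn (Fl k b) - Dl k b) ^ 2 = 0 := by
      have := heb
      simp only [hedef] at this
      nlinarith [sq_nonneg (sn (Fl k b) - Real.sin b), sq_nonneg (cn (Fl k b) - Real.cos b),
        sq_nonneg (dn (Fl k b) - Dl k b)]
    exact pow_eq_zero_iff (by norm_num) |>.mp h1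
  exact ⟨by linarith, by linarith, by linarith⟩

end

section
variable {k : ℝ}

theorem Dl_inner_pos' (hk0 : 0 < k) (hk1 : k < 1) (θ : ℝ) :
    1 - k ^ 2 ≤ 1 - k ^ 2 * Real.sin θ ^ 2 := by
  nlinarith [Real.sin_sq_le_one θ, sq_nonneg k]

theorem Dl_pos' (hk0 : 0 < k) (hk1 : k < 1) (θ : ℝ) : 0 < Dl k θ := by
  have h := Dl_inner_pos' hk0 hk1 θ
  have : (0:ℝ) < 1 - k ^ 2 := by nlinarith
  exact Real.sqrt_pos.mpr (by linarith)

theorem Dl_cont : Continuous (Dl k) :=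
  (continuous_const.sub (continuous_const.mul ((Real.continuous_sin).pow 2))).sqrt

theorem Dl_inv_cont (hk0 : 0 < k) (hk1 : k < 1) : Continuous fun θ => 1 / Dl k θ :=
  Continuous.div continuous_const Dl_cont fun θ => (Dl_pos' hk0 hk1 θ).ne'

theorem Dl_refl (θ : ℝ) : Dl k (Real.pi - θ) = Dl k θ := by
  simp [Dl, Real.sin_pi_sub]

-- reflection for any continuous g with g ∘ (π - ·) = g
theorem integral_refl (g : ℝ → ℝ) (hg : Continuous g) (hrefl : ∀ θ, g (Real.pi - θ) = g θ) :
    ∫ θ in (0:ℝ)..Real.pi, g θ = 2 * ∫ θ in (0:ℝ)..(Real.pi/2), g θ := by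
  have hsplit : ∫ θ in (0:ℝ)..Real.pi, g θ
      = (∫ θ in (0:ℝ)..(Real.pi/2), g θ) + ∫ θ in (Real.pi/2)..Real.pi, g θ := by
    rw [intervalIntegral.integral_add_adjacent_intervals
      (hg.intervalIntegrable _ _) (hg.intervalIntegrable _ _)]
  have hc : ∫ θ in (0:ℝ)..(Real.pi/2), g (Real.pi - θ)
      = ∫ θ in (Real.pi - Real.pi/2)..(Real.pi - 0), g θ :=
    intervalIntegral.integral_comp_sub_left g Real.pi
  have h2 : ∫ θ in (0:ℝ)..(Real.pi/2), g (Real.pi - θ) = ∫ θ in (0:ℝ)..(Real.pi/2), g θ := by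
    apply intervalIntegral.integral_congr
    intro θ _
    exact hrefl θ
  rw [h2] at hc
  rw [show Real.pi - Real.pi/2 = Real.pi/2 by ring, sub_zero] at hc
  rw [hsplit, ← hc]
  ring

theorem Fl_pi (hk0 : 0 < k) (hk1 : k < 1) : Fl k Real.pi = 2 * ellipticK k := by
  have := integral_refl (fun θ => 1 / Dl k θ) (Dl_inv_cont hk0 hk1)
    (fun θ => by show 1 / Dl k (Real.pi - θ) = 1 / Dl k θ; rw [Dl_refl])
  simpa [Fl, ellipticK, Dl] using this

theorem Dl_int_pi (hk0 : 0 < k) (hk1 : k < 1) :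
    ∫ θ in (0:ℝ)..Real.pi, Dl k θ = 2 * ellipticE k := by
  have := integral_refl (Dl k) Dl_cont (fun θ => Dl_refl θ)
  simpa [ellipticE, Dl] using this

-- the key inequality
theorem key_ineq (hk0 : 0 < k) (hk1 : k < 1) :
    4 * (1 - k ^ 2) * ellipticK k + (k ^ 2 - 2) * (2 * ellipticE k) < 0 := by
  have hDpos := Dl_pos' hk0 hk1
  have hDsq : ∀ θ, Dl k θ ^ 2 = 1 - k ^ 2 * Real.sin θ ^ 2 := by
    intro θ
    have h := Dl_inner_pos' hk0 hk1 θ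
    have h2 : (0:ℝ) < 1 - k ^ 2 := by nlinarith
    exact Real.sq_sqrt (by linarith)
  -- Q θ = k^2 sin θ cos θ / Dl θ, has derivative R θ
  set R : ℝ → ℝ := fun θ => (2 - k ^ 2) * Dl k θ - 2 * (1 - k ^ 2) * (1 / Dl k θ)
      - k ^ 4 * (1 - k ^ 2) * (Real.sin θ ^ 4 / Dl k θ ^ 3) with hRdef
  have hQ : ∀ θ, HasDerivAt (fun θ => k ^ 2 * (Real.sin θ * Real.cos θ) / Dl k θ) (R θ) θ := by
    intro θ
    have hDd : HasDerivAt (Dl k) (-(k ^ 2 * Real.sin θ * Real.cos θ) / Dl k θ) θ := by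
      have hin : HasDerivAt (fun θ => 1 - k ^ 2 * Real.sin θ ^ 2)
          (-(k ^ 2 * (2 * Real.sin θ ^ 1 * Real.cos θ))) θ := by
        simpa using (((Real.hasDerivAt_sin θ).pow 2).const_mul (k ^ 2)).const_sub 1
      have h := hin.sqrt (by have := Dl_inner_pos' hk0 hk1 θ; nlinarith)
      refine h.congr_deriv ?_
      rw [show Real.sqrt (1 - k ^ 2 * Real.sin θ ^ 2) = Dl k θ from rfl]
      field_simp
    have hnum : HasDerivAt (fun θ => k ^ 2 * (Real.sin θ * Real.cos θ))
        (k ^ 2 * (Real.cos θ * Real.cos θ + Real.sin θ * -Real.sin θ)) θ :=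
      ((Real.hasDerivAt_sin θ).mul (Real.hasDerivAt_cos θ)).const_mul (k ^ 2)
    have h := hnum.div hDd (hDpos θ).ne'
    refine h.congr_deriv ?_
    rw [hRdef]
    have hD := (hDpos θ).ne'
    have hsc : Real.sin θ ^ 2 + Real.cos θ ^ 2 = 1 := Real.sin_sq_add_cos_sq θ
    have hd2 := hDsq θ
    field_simp
    ring_nf
    linear_combination (k ^ 2 * (1 - 2 * Real.sin θ ^ 2) - (2 - k ^ 2) * (Dl k θ ^ 2 + 1 - k ^ 2 * Real.sin θ ^ 2) + 2 * (1 - k ^ 2)) * hd2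
      + (k ^ 2 * Dl k θ ^ 2 + k ^ 4 * Real.sin θ ^ 2) * hsc
  have hRcont : Continuous R := by
    rw [hRdef]
    apply Continuous.sub
    · apply Continuous.sub
      · exact continuous_const.mul Dl_cont
      · exact continuous_const.mul (Dl_inv_cont hk0 hk1)
    · exact continuous_const.mul ((Real.continuous_sin.pow 4).div (Dl_cont.pow 3)
        (fun θ => pow_ne_zero 3 (hDpos θ).ne'))
  have hFTC := intervalIntegral.integral_eq_sub_of_hasDerivAt
    (f := fun θ => k ^ 2 * (Real.sin θ * Real.cos θ) / Dl k θ) (f' := R)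
    (a := 0) (b := Real.pi/2) (fun θ _ => hQ θ) (hRcont.intervalIntegrable _ _)
  have hend : k ^ 2 * (Real.sin (Real.pi/2) * Real.cos (Real.pi/2)) / Dl k (Real.pi/2)
      - k ^ 2 * (Real.sin 0 * Real.cos 0) / Dl k 0 = 0 := by
    rw [Real.cos_pi_div_two, Real.sin_zero]; ring
  rw [hend] at hFTC
  have hsplitint : ∫ θ in (0:ℝ)..Real.pi/2, R θ
      = (2 - k ^ 2) * ellipticE k - 2 * (1 - k ^ 2) * ellipticK k
        - k ^ 4 * (1 - k ^ 2) * ∫ θ in (0:ℝ)..Real.pi/2, Real.sin θ ^ 4 / Dl k θ ^ 3 := by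
    have hi1 : IntervalIntegrable (fun θ => (2 - k ^ 2) * Dl k θ) volume 0 (Real.pi/2) :=
      (continuous_const.mul Dl_cont).intervalIntegrable _ _
    have hi2 : IntervalIntegrable (fun θ => 2 * (1 - k ^ 2) * (1 / Dl k θ)) volume 0 (Real.pi/2) :=
      (continuous_const.mul (Dl_inv_cont hk0 hk1)).intervalIntegrable _ _
    have hi3 : IntervalIntegrable (fun θ => k ^ 4 * (1 - k ^ 2) * (Real.sin θ ^ 4 / Dl k θ ^ 3))
        volume 0 (Real.pi/2) :=
      (continuous_const.mul ((Real.continuous_sin.pow 4).div (Dl_cont.pow 3)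
        (fun θ => pow_ne_zero 3 (hDpos θ).ne'))).intervalIntegrable _ _
    rw [hRdef]
    rw [intervalIntegral.integral_sub (hi1.sub hi2) hi3,
        intervalIntegral.integral_sub hi1 hi2,
        intervalIntegral.integral_const_mul, intervalIntegral.integral_const_mul,
        intervalIntegral.integral_const_mul]
    rfl
  have hS : 0 < ∫ θ in (0:ℝ)..Real.pi/2, Real.sin θ ^ 4 / Dl k θ ^ 3 := by
    apply intervalIntegral.intervalIntegral_pos_of_pos_on
    · exact ((Real.continuous_sin.pow 4).div (Dl_cont.pow 3)
        (fun θ => pow_ne_zero 3 (hDpos θ).ne')).intervalIntegrable _ _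
    · intro x hx
      have hsin : 0 < Real.sin x := Real.sin_pos_of_pos_of_lt_pi hx.1
        (lt_trans hx.2 (by linarith [Real.pi_pos]))
      exact div_pos (pow_pos hsin 4) (pow_pos (hDpos x) 3)
    · linarith [Real.pi_pos]
  rw [hsplitint] at hFTC
  have h1k : 0 < 1 - k ^ 2 := by nlinarith
  have hP : 0 < k ^ 4 * (1 - k ^ 2) * ∫ θ in (0:ℝ)..Real.pi/2, Real.sin θ ^ 4 / Dl k θ ^ 3 := by
    exact mul_pos (mul_pos (pow_pos hk0 4) h1k) hS
  linarith

end

/-- every 2K-periodic H² (here C²) solution of L₊v = 0 is a constant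
multiple of sn·cn. -/
theorem stmt_10 (k : ℝ) (hk0 : 0 < k) (hk1 : k < 1)
    (sn cn dn : ℝ → ℝ)
    (hsn0 : sn 0 = 0) (hcn0 : cn 0 = 1) (hdn0 : dn 0 = 1)
    (hsn' : ∀ z, HasDerivAt sn (cn z * dn z) z)
    (hcn' : ∀ z, HasDerivAt cn (-(sn z * dn z)) z)
    (hdn' : ∀ z, HasDerivAt dn (-(k ^ 2 * sn z * cn z)) z)
    (v : ℝ → ℝ) (hv : ContDiff ℝ 2 v)
    (hper : ∀ z, v (z + 2 * ellipticK k) = v z)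
    (hsol : ∀ z, Lp k dn v z = 0) :
    ∃ c : ℝ, ∀ z, v z = c * (sn z * cn z) := by
  -- basic identities
  have hpyth : ∀ z, sn z ^ 2 + cn z ^ 2 = 1 := my_pyth hsn0 hcn0 hsn' hcn'
  have hdnsq : ∀ z, dn z ^ 2 = 1 - k ^ 2 * sn z ^ 2 := my_dnsq k hsn0 hdn0 hsn' hdn'
  have hsnb : ∀ z, sn z ^ 2 ≤ 1 := fun z => by nlinarith [hpyth z, sq_nonneg (cn z)]
  have hdnpos : ∀ z, 0 < dn z := my_dn_pos hk1 hk0 hdn0 hdn' hdnsq hsnb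
  have hcnb : ∀ z, |cn z| ≤ 1 := fun z => by
    nlinarith [sq_abs (cn z), hpyth z, sq_nonneg (sn z), abs_nonneg (cn z)]
  have hdnb : ∀ z, |dn z| ≤ 1 := fun z => by
    nlinarith [sq_abs (dn z), hdnsq z, sq_nonneg (sn z), abs_nonneg (dn z), sq_nonneg (k * sn z)]
  -- values at 2K
  have hinvpi := inversion hk0 hk1 hsn0 hcn0 hdn0 hsn' hcn' hdn' hcnb hdnb Real.pi Real.pi_pos.le
  have hFpi : Fl k Real.pi = 2 * ellipticK k := Fl_pi hk0 hk1
  have hsn2K : sn (2 * ellipticK k) = 0 := by rw [← hFpi, hinvpi.1, Real.sin_pi]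
  have hcn2K : cn (2 * ellipticK k) = -1 := by rw [← hFpi, hinvpi.2.1, Real.cos_pi]
  have hdn2K : dn (2 * ellipticK k) = 1 := by
    rw [← hFpi, hinvpi.2.2]
    simp [Dl, Real.sin_pi]
  -- the antiderivative of dn²
  have hdncont : Continuous dn := by
    rw [continuous_iff_continuousAt]
    exact fun z => (hdn' z).continuousAt
  set I : ℝ → ℝ := fun z => ∫ t in (0:ℝ)..z, dn t ^ 2 with hIdef
  have hI : ∀ z, HasDerivAt I (dn z ^ 2) z := fun z =>
    ((hdncont.pow 2).integral_hasStrictDerivAt 0 z).hasDerivAt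
  have hI0 : I 0 = 0 := intervalIntegral.integral_same
  have hI2K : I (2 * ellipticK k) = 2 * ellipticE k := by
    have hG : ∀ θ, HasDerivAt (fun θ => I (Fl k θ) - ∫ t in (0:ℝ)..θ, Dl k t)
        (dn (Fl k θ) ^ 2 * (1 / Dl k θ) - Dl k θ) θ := fun θ =>
      ((hI (Fl k θ)).comp θ (Fl_hasDerivAt hk0 hk1 θ)).sub
        ((Dl_cont.integral_hasStrictDerivAt 0 θ).hasDerivAt)
    have hG0 : ∀ θ ∈ Set.uIcc (0:ℝ) Real.pi,
        HasDerivAt (fun θ => I (Fl k θ) - ∫ t in (0:ℝ)..θ, Dl k t) ((fun _ => (0:ℝ)) θ) θ := by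
      intro θ hθ
      rw [Set.uIcc_of_le Real.pi_pos.le] at hθ
      have hd := (inversion hk0 hk1 hsn0 hcn0 hdn0 hsn' hcn' hdn' hcnb hdnb θ hθ.1).2.2
      have h := hG θ
      rw [hd] at h
      convert h using 1
      have hD := (Dl_pos' hk0 hk1 θ).ne'
      field_simp
      ring
    have hint := intervalIntegral.integral_eq_sub_of_hasDerivAt hG0
      ((continuous_const (y := (0:ℝ))).intervalIntegrable 0 Real.pi)
    simp only [intervalIntegral.integral_zero] at hint
    have hFl0 : Fl k 0 = 0 := intervalIntegral.integral_same
    rw [hFl0, hI0, intervalIntegral.integral_same] at hint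
    have hDpi : ∫ t in (0:ℝ)..Real.pi, Dl k t = 2 * ellipticE k := Dl_int_pi hk0 hk1
    rw [hFpi, hDpi] at hint
    linarith
  -- regularity of v
  have hv1 : Differentiable ℝ v := hv.differentiable (by norm_num)
  have hvd1 : ContDiff ℝ 1 (deriv v) := by
    have h2 : ContDiff ℝ ((1 : ℕ) + 1 : ℕ) v := by exact_mod_cast hv
    exact (contDiff_succ_iff_deriv.mp (by exact_mod_cast h2)).2.2
  have hv2 : Differentiable ℝ (deriv v) := hvd1.differentiable one_ne_zero
  set Φ : ℝ → ℝ := fun z => -(6 * dn z ^ 2 + k ^ 2 - 2) with hΦdef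
  have hΦv : ∀ z, deriv (deriv v) z = Φ z * v z := by
    intro z
    have h : -(deriv (deriv v) z) - (6 * dn z ^ 2 + k ^ 2 - 2) * v z = 0 := hsol z
    simp only [hΦdef]
    linarith
  have hv' : ∀ z, HasDerivAt v (deriv v z) z := fun z => (hv1 z).hasDerivAt
  have hv'' : ∀ z, HasDerivAt (deriv v) (Φ z * v z) z := fun z => by
    have h := (hv2 z).hasDerivAt
    rwa [hΦv z] at h
  -- the explicit solutions w and U1
  set w : ℝ → ℝ := fun z => sn z * cn z with hwdef
  set wd : ℝ → ℝ := fun z => dn z * (cn z ^ 2 - sn z ^ 2) with hwddef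
  have hw : ∀ z, HasDerivAt w (wd z) z := fun z => by
    have h := (hsn' z).mul (hcn' z)
    refine h.congr_deriv ?_
    simp only [hwddef]
    ring
  have hwd : ∀ z, HasDerivAt wd (Φ z * w z) z := fun z => by
    have h := (hdn' z).mul (((hcn' z).pow 2).sub ((hsn' z).pow 2))
    refine h.congr_deriv ?_
    simp only [hwddef, hwdef, hΦdef, Pi.sub_apply, Pi.pow_apply]
    push_cast
    linear_combination (-(k ^ 2 * sn z * cn z)) * hpyth z + (2 * sn z * cn z) * hdnsq z
  set f : ℝ → ℝ := fun z => (k ^ 2 - 1) * dn z + (2 - k ^ 2) * (dn z * sn z ^ 2) with hfdef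
  set fd : ℝ → ℝ := fun z => (4 - k ^ 2 - k ^ 4) * (sn z * cn z)
      + (3 * k ^ 4 - 6 * k ^ 2) * (sn z ^ 3 * cn z) with hfddef
  have hf : ∀ z, HasDerivAt f (fd z) z := fun z => by
    have h := ((hdn' z).const_mul (k ^ 2 - 1)).add
      (((hdn' z).mul ((hsn' z).pow 2)).const_mul (2 - k ^ 2))
    refine h.congr_deriv ?_
    simp only [hfddef, Pi.pow_apply]
    push_cast
    linear_combination (-((2 * k ^ 2 - 4) * (sn z * cn z))) * hdnsq z
  set U1 : ℝ → ℝ := fun z => 2 * (1 - k ^ 2) * (z * w z) + (k ^ 2 - 2) * (I z * w z) + f z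
    with hU1def
  set U1d : ℝ → ℝ := fun z => 2 * (1 - k ^ 2) * (w z + z * wd z)
      + (k ^ 2 - 2) * (dn z ^ 2 * w z + I z * wd z) + fd z with hU1ddef
  have hU1 : ∀ z, HasDerivAt U1 (U1d z) z := fun z => by
    have h := ((((hasDerivAt_id z).mul (hw z)).const_mul (2 * (1 - k ^ 2))).add
      (((hI z).mul (hw z)).const_mul (k ^ 2 - 2))).add (hf z)
    refine h.congr_deriv ?_
    simp only [hU1ddef, id_eq]
    ring
  have hU1d : ∀ z, HasDerivAt U1d (Φ z * U1 z) z := fun z => by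
    have h1 := ((hw z).add ((hasDerivAt_id z).mul (hwd z))).const_mul (2 * (1 - k ^ 2))
    have h2 := ((((hdn' z).pow 2).mul (hw z)).add ((hI z).mul (hwd z))).const_mul (k ^ 2 - 2)
    have h3 := (((hsn' z).mul (hcn' z)).const_mul (4 - k ^ 2 - k ^ 4)).add
      ((((hsn' z).pow 3).mul (hcn' z)).const_mul (3 * k ^ 4 - 6 * k ^ 2))
    have h : HasDerivAt U1d (2 * (1 - k ^ 2) * (wd z + (1 * wd z + z * (Φ z * w z)))
        + (k ^ 2 - 2) * ((2 * dn z ^ (2-1) * -(k ^ 2 * sn z * cn z)) * w z + dn z ^ 2 * wd z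
            + (dn z ^ 2 * wd z + I z * (Φ z * w z)))
        + ((4 - k ^ 2 - k ^ 4) * (cn z * dn z * cn z + sn z * -(sn z * dn z))
            + (3 * k ^ 4 - 6 * k ^ 2) * ((3 * sn z ^ (3-1) * (cn z * dn z)) * cn z
              + sn z ^ 3 * -(sn z * dn z)))) z := by
      have hsum := (h1.add h2).add h3
      refine hsum.congr_deriv ?_
      all_goals (push_cast; simp only [id_eq, Pi.pow_apply])
    convert h using 1
    simp only [hU1def, hU1ddef, hwdef, hwddef, hfdef, hfddef, hΦdef]
    push_cast
    linear_combination
      (-(8 * dn z - 5 * k ^ 2 * dn z - k ^ 4 * dn z - 4 * dn z ^ 3 + 2 * k ^ 2 * dn z ^ 3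
        - 14 * k ^ 2 * sn z ^ 2 * dn z + 7 * k ^ 4 * sn z ^ 2 * dn z)) * hpyth z
      + (-(-10 * dn z + 8 * k ^ 2 * dn z + 20 * sn z ^ 2 * dn z
        - 10 * k ^ 2 * sn z ^ 2 * dn z)) * hdnsq z
  -- Wronskian constants
  have hWuw : ∀ z, U1 z * wd z - U1d z * w z = k ^ 2 - 1 := by
    have hD : ∀ z, HasDerivAt (fun z => U1 z * wd z - U1d z * w z) 0 z := fun z => by
      have h := ((hU1 z).mul (hwd z)).sub ((hU1d z).mul (hw z))
      refine h.congr_deriv ?_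
      ring
    intro z
    have hc := is_const_of_deriv_eq_zero (𝕜 := ℝ)
      (fun x => (hD x).differentiableAt) (fun x => (hD x).deriv) z 0
    rw [hc]
    simp only [hU1def, hU1ddef, hwdef, hwddef, hfdef, hfddef, hsn0, hcn0, hdn0, hI0]
    ring
  have hBf : ∀ z, v z * wd z - deriv v z * w z = v 0 := by
    have hD : ∀ z, HasDerivAt (fun z => v z * wd z - deriv v z * w z) 0 z := fun z => by
      have h := ((hv' z).mul (hwd z)).sub ((hv'' z).mul (hw z))
      refine h.congr_deriv ?_
      ring
    intro z
    have hc := is_const_of_deriv_eq_zero (𝕜 := ℝ)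
      (fun x => (hD x).differentiableAt) (fun x => (hD x).deriv) z 0
    rw [hc]
    simp only [hwdef, hwddef, hsn0, hcn0, hdn0]
    ring
  have hAf : ∀ z, v z * U1d z - deriv v z * U1 z = -(deriv v 0) * (k ^ 2 - 1) := by
    have hD : ∀ z, HasDerivAt (fun z => v z * U1d z - deriv v z * U1 z) 0 z := fun z => by
      have h := ((hv' z).mul (hU1d z)).sub ((hv'' z).mul (hU1 z))
      refine h.congr_deriv ?_
      ring
    intro z
    have hc := is_const_of_deriv_eq_zero (𝕜 := ℝ)
      (fun x => (hD x).differentiableAt) (fun x => (hD x).deriv) z 0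
    rw [hc]
    simp only [hU1def, hU1ddef, hwdef, hwddef, hfdef, hfddef, hsn0, hcn0, hdn0, hI0]
    ring
  -- the representation
  set Bc : ℝ := v 0 with hBcdef
  set Ac : ℝ := -(deriv v 0) * (k ^ 2 - 1) with hAcdef
  have hrep : ∀ z, (k ^ 2 - 1) * v z = Bc * U1 z - Ac * w z := by
    intro z
    have h1 := hWuw z
    have h2 := hBf z
    have h3 := hAf z
    linear_combination (-(v z)) * h1 + (U1 z) * h2 - (w z) * h3
  have hrepd : ∀ z, (k ^ 2 - 1) * deriv v z = Bc * U1d z - Ac * wd z := by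
    intro z
    have hL : HasDerivAt (fun z => (k ^ 2 - 1) * v z) ((k ^ 2 - 1) * deriv v z) z :=
      (hv' z).const_mul _
    have hR : HasDerivAt (fun z => Bc * U1 z - Ac * w z) (Bc * U1d z - Ac * wd z) z :=
      ((hU1 z).const_mul _).sub ((hw z).const_mul _)
    have hfe : (fun z => (k ^ 2 - 1) * v z) = fun z => Bc * U1 z - Ac * w z := funext hrep
    rw [hfe] at hL
    exact hL.unique hR
  -- periodicity of deriv v
  have hperd : deriv v (0 + 2 * ellipticK k) = deriv v 0 := by
    have hfe : (fun z => v (z + 2 * ellipticK k)) = v := funext hper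
    have h1 : HasDerivAt (fun z => v (z + 2 * ellipticK k))
        (deriv v (0 + 2 * ellipticK k) * 1) 0 :=
      (hv' (0 + 2 * ellipticK k)).comp 0 ((hasDerivAt_id 0).add_const (2 * ellipticK k))
    rw [hfe] at h1
    have := h1.unique (hv' 0)
    linarith
  -- evaluate the derivative representation at 0 and at 2K
  set T : ℝ := 2 * ellipticK k with hTdef
  have hval0 : (k ^ 2 - 1) * deriv v 0 = -Ac := by
    have h := hrepd 0
    simp only [hU1ddef, hwdef, hwddef, hfddef, hsn0, hcn0, hdn0, hI0] at h
    rw [h]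
    ring
  have hvalT : (k ^ 2 - 1) * deriv v T = Bc * (2 * (1 - k ^ 2) * T
      + (k ^ 2 - 2) * (2 * ellipticE k)) - Ac := by
    have h := hrepd T
    simp only [hU1ddef, hwdef, hwddef, hfddef, hsn2K, hcn2K, hdn2K, hI2K] at h
    rw [h]
    ring
  have hperd' : deriv v T = deriv v 0 := by rw [← hperd]; norm_num
  have hα : 2 * (1 - k ^ 2) * T + (k ^ 2 - 2) * (2 * ellipticE k) < 0 := by
    have := key_ineq hk0 hk1
    simp only [hTdef]
    linarith
  have hBc0 : Bc = 0 := by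
    rw [hperd'] at hvalT
    rw [hval0] at hvalT
    have hmul : Bc * (2 * (1 - k ^ 2) * T + (k ^ 2 - 2) * (2 * ellipticE k)) = 0 := by linarith
    rcases mul_eq_zero.mp hmul with h | h
    · exact h
    · exact absurd h (ne_of_lt hα)
  -- conclude
  have hne' : (1 : ℝ) - k ^ 2 ≠ 0 := by nlinarith
  refine ⟨Ac / (1 - k ^ 2), fun z => ?_⟩
  have h := hrep z
  rw [hBc0] at h
  simp only [hwdef] at h
  field_simp [hne']
  linear_combination (-1 : ℝ) * h
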